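/- Let e = 30 (the exponent of Alt(5)). For every n ≥ 1, the level stabilizer St_W(n) is the closure in W of the subgroup generated by all e^n-th powers: concretely, for all n and all m ≥ n, the image in Aut(T[m]) of the subgroup of W generated by {w^{e^n} : w ∈ W} equals the image in Aut(T[m]) of St_W(n). In particular St_W(n) is a topologically characteristic subgroup of W, preserved by every continuous automorphism of W. -/

import Mathlib

noncomputable section

/-- The vertex set of the rooted 5-regular tree `T`: finite words over the alphabet
`{1,…,5}` (realised as `Fin 5`), the empty word being the root; a word `w` is joined to
the words `w ++ [x]`. -/
abbrev Vtx : Type := List (Fin 5)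

/-- The profinite branch group `W ≤ Aut(T)`: the group of automorphisms of the rooted tree
`T` (permutations of the vertices fixing the root and sending the children of a vertex to
the children of its image) all of whose local permutations lie in `Alt(5)`. -/
def Wgrp : Subgroup (Equiv.Perm Vtx) where
  carrier := {σ | σ [] = [] ∧
    ∀ w : Vtx, ∃ π : Equiv.Perm (Fin 5), π ∈ alternatingGroup (Fin 5) ∧
      ∀ x : Fin 5, σ (w ++ [x]) = σ w ++ [π x]}
  one_mem' := ⟨rfl, fun w => ⟨1, one_mem _, fun x => rfl⟩⟩
  mul_mem' := by
    rintro a b ⟨ha0, ha⟩ ⟨hb0, hb⟩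
    refine ⟨by simp [Equiv.Perm.mul_apply, hb0, ha0], fun w => ?_⟩
    obtain ⟨πb, hπb, hb'⟩ := hb w
    obtain ⟨πa, hπa, ha'⟩ := ha (b w)
    exact ⟨πa * πb, mul_mem hπa hπb,
      fun x => by simp [Equiv.Perm.mul_apply, hb' x, ha' (πb x)]⟩
  inv_mem' := by
    rintro σ ⟨h0, h⟩
    refine ⟨by exact Equiv.Perm.inv_eq_iff_eq.mpr h0.symm, fun w => ?_⟩
    obtain ⟨π, hπ, h'⟩ := h (σ⁻¹ w)
    refine ⟨π⁻¹, inv_mem hπ, fun x => ?_⟩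
    have : σ (σ⁻¹ w ++ [π⁻¹ x]) = w ++ [x] := by
      rw [h' (π⁻¹ x)]
      simp
    calc σ⁻¹ (w ++ [x]) = σ⁻¹ (σ (σ⁻¹ w ++ [π⁻¹ x])) := by rw [this]
    _ = σ⁻¹ w ++ [π⁻¹ x] := by simp

theorem Wgrp.length_eq {σ : Equiv.Perm Vtx} (hσ : σ ∈ Wgrp) (w : Vtx) :
    (σ w).length = w.length := by
  induction w using List.reverseRecOn with
  | nil => simp [hσ.1]
  | append_singleton w x ih =>
      obtain ⟨π, _, h⟩ := hσ.2 w
      simp [h x, ih]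

/-- The `n`-th level stabilizer `St_W(n) ≤ W`: the kernel of the restriction map
`W → Aut(T[n])`, i.e. the set of elements of `W` fixing every word of length at most `n`. -/
def StW (n : ℕ) : Subgroup ↥Wgrp where
  carrier := {σ | ∀ w : Vtx, w.length ≤ n → (σ : Equiv.Perm Vtx) w = w}
  one_mem' := fun w _ => rfl
  mul_mem' := by
    intro a b ha hb w hw
    have : ((a * b : ↥Wgrp) : Equiv.Perm Vtx) w = (a : Equiv.Perm Vtx) ((b : Equiv.Perm Vtx) w) := rfl
    rw [this, hb w hw, ha w hw]
  inv_mem' := by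
    intro σ hσ w hw
    have hlen : ((σ : Equiv.Perm Vtx)⁻¹ w).length = w.length := by
      conv_rhs => rw [← (Equiv.apply_symm_apply (σ : Equiv.Perm Vtx) w :
        (σ : Equiv.Perm Vtx) ((σ : Equiv.Perm Vtx)⁻¹ w) = w)]
      exact (Wgrp.length_eq σ.2 _).symm
    have : (σ : Equiv.Perm Vtx) ((σ : Equiv.Perm Vtx)⁻¹ w) = (σ : Equiv.Perm Vtx)⁻¹ w :=
      hσ _ (hlen.le.trans hw)
    have h2 : (σ : Equiv.Perm Vtx) ((σ : Equiv.Perm Vtx)⁻¹ w) = w :=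
      Equiv.apply_symm_apply _ w
    exact this.symm.trans h2

/-- The subgroup of `W` generated by all `e^n`-th powers, where `e = 30` is the exponent
of `Alt(5)`. -/
def powSub (n : ℕ) : Subgroup ↥Wgrp :=
  Subgroup.closure {g : ↥Wgrp | ∃ w : ↥Wgrp, g = w ^ (30 ^ n)}

open Equiv

/-! ### Decidable facts about `Alt(5)` -/

set_option maxRecDepth 1000000 in
set_option maxHeartbeats 4000000 in
theorem alt5_pow30 : ∀ π : Perm (Fin 5), π.sign = 1 → π ^ 30 = 1 := by decide

set_option maxRecDepth 1000000 in
set_option maxHeartbeats 4000000 in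
theorem alt5_two_inv : ∀ π : Perm (Fin 5), π.sign = 1 →
    ∃ σ, σ * σ = 1 ∧ σ.sign = 1 ∧ (σ * π) * (σ * π) = 1 := by decide

set_option maxRecDepth 1000000 in
set_option maxHeartbeats 4000000 in
theorem alt5_comm_base : ∃ β : Perm (Fin 5), β.sign = 1 ∧ (swap (0:Fin 5) 1 * swap 1 2).sign = 1 ∧
    (swap (0:Fin 5) 1 * swap 1 2) * β * (swap (0:Fin 5) 1 * swap 1 2)⁻¹ * β⁻¹ = swap (0:Fin 5) 1 * swap 2 3 := by decide

set_option maxRecDepth 1000000 in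
set_option maxHeartbeats 4000000 in
theorem alt5_conj_inv : ∀ ι : Perm (Fin 5), ι * ι = 1 → ι.sign = 1 → ι ≠ 1 →
    ∃ g : Perm (Fin 5), g.sign = 1 ∧ g * (swap (0:Fin 5) 1 * swap 2 3) * g⁻¹ = ι := by decide

set_option maxRecDepth 1000000 in
set_option maxHeartbeats 4000000 in
theorem alt5_dt : ∀ a : Fin 5, ∃ ρ : Perm (Fin 5), ∃ b : Fin 5,
    ρ.sign = 1 ∧ ρ * ρ = 1 ∧ ρ a = b ∧ b ≠ a := by decide

/-- Every even involution is a commutator of two even permutations. -/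
theorem alt5_inv_comm (ι : Perm (Fin 5)) (h2 : ι * ι = 1) (hs : ι.sign = 1) :
    ∃ α β : Perm (Fin 5), α.sign = 1 ∧ β.sign = 1 ∧ α * β * α⁻¹ * β⁻¹ = ι := by
  rcases eq_or_ne ι 1 with rfl | hne
  · exact ⟨1, 1, by simp, by simp, by group⟩
  obtain ⟨g, hg, hgι⟩ := alt5_conj_inv ι h2 hs hne
  obtain ⟨β, hβ, hα, hc⟩ := alt5_comm_base
  refine ⟨g * (swap (0:Fin 5) 1 * swap 1 2) * g⁻¹, g * β * g⁻¹, ?_, ?_, ?_⟩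
  · simp [hα]
  · simp [hβ]
  · rw [← hgι, ← hc]; group
open Equiv
/-! ### Wreath recursion: building tree automorphisms -/

def wrFun (ρ : Perm (Fin 5)) (f : Fin 5 → Perm Vtx) : Vtx → Vtx
  | [] => []
  | x :: w => ρ x :: f x w

def wr (ρ : Perm (Fin 5)) (f : Fin 5 → Perm Vtx) : Perm Vtx where
  toFun := wrFun ρ f
  invFun := wrFun ρ⁻¹ (fun x => (f (ρ⁻¹ x))⁻¹)
  left_inv := by rintro (_ | ⟨x, w⟩) <;> simp [wrFun]
  right_inv := by rintro (_ | ⟨x, w⟩) <;> simp [wrFun]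

@[simp] lemma wr_nil (ρ : Perm (Fin 5)) (f : Fin 5 → Perm Vtx) : wr ρ f [] = [] := rfl

@[simp] lemma wr_cons (ρ : Perm (Fin 5)) (f : Fin 5 → Perm Vtx) (x : Fin 5) (w : Vtx) :
    wr ρ f (x :: w) = ρ x :: f x w := rfl

lemma wr_congr {ρ ρ' : Perm (Fin 5)} {f f' : Fin 5 → Perm Vtx} (hρ : ρ = ρ')
    (hf : ∀ x, f x = f' x) : wr ρ f = wr ρ' f' := by
  subst hρ
  have : f = f' := funext hf
  subst this
  rfl

lemma wr_mul (ρ ρ' : Perm (Fin 5)) (f f' : Fin 5 → Perm Vtx) :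
    wr ρ f * wr ρ' f' = wr (ρ * ρ') (fun x => f (ρ' x) * f' x) := by
  ext w
  cases w <;> rfl

lemma wr_one : wr 1 (fun _ => 1) = 1 := by
  ext w
  cases w <;> rfl

lemma wr_mem (ρ : Perm (Fin 5)) (f : Fin 5 → Perm Vtx) (hρ : ρ.sign = 1)
    (hf : ∀ x, f x ∈ Wgrp) : wr ρ f ∈ Wgrp := by
  refine ⟨rfl, fun w => ?_⟩
  cases w with
  | nil =>
    refine ⟨ρ, Equiv.Perm.mem_alternatingGroup.2 hρ, fun x => ?_⟩
    show wr ρ f (x :: []) = [] ++ [ρ x]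
    simp [(hf x).1]
  | cons x u =>
    obtain ⟨π, hπ, h⟩ := (hf x).2 u
    exact ⟨π, hπ, fun y => by
      show wr ρ f (x :: (u ++ [y])) = wr ρ f (x :: u) ++ [π y]
      simp [h y]⟩

lemma wr_one_pow (f : Fin 5 → Perm Vtx) (k : ℕ) :
    (wr 1 f) ^ k = wr 1 (fun x => (f x) ^ k) := by
  induction k with
  | zero => simpa using wr_one.symm
  | succ k ih =>
    rw [pow_succ, ih, wr_mul]
    exact wr_congr (one_mul 1) (fun x => by simp [pow_succ])

/-! ### Rigid vertex automorphisms -/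

def rigid : Vtx → Perm (Fin 5) → Perm Vtx
  | [], π => wr π (fun _ => 1)
  | x :: v, π => wr 1 (fun y => if y = x then rigid v π else 1)

lemma rigid_one (v : Vtx) : rigid v (1 : Perm (Fin 5)) = 1 := by
  induction v with
  | nil => exact wr_one
  | cons x v ih =>
    show wr 1 (fun y => if y = x then rigid v 1 else 1) = 1
    rw [ih]
    simpa using wr_one

lemma rigid_mul (v : Vtx) (π π' : Perm (Fin 5)) :
    rigid v π * rigid v π' = rigid v (π * π') := by
  induction v with
  | nil =>
    show wr π _ * wr π' _ = wr (π * π') _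
    rw [wr_mul]
    exact wr_congr rfl (fun x => one_mul 1)
  | cons x v ih =>
    show wr 1 _ * wr 1 _ = wr 1 _
    rw [wr_mul]
    refine wr_congr (one_mul 1) (fun y => ?_)
    by_cases h : y = x <;> simp [h, ih]

lemma rigid_mem (v : Vtx) (π : Perm (Fin 5)) (hπ : π.sign = 1) : rigid v π ∈ Wgrp := by
  induction v with
  | nil => exact wr_mem _ _ hπ (fun _ => one_mem _)
  | cons x v ih =>
    refine wr_mem _ _ (by simp) (fun y => ?_)
    by_cases h : y = x <;> simp [h, ih, one_mem]

lemma rigid_pow (v : Vtx) (π : Perm (Fin 5)) (k : ℕ) :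
    (rigid v π) ^ k = rigid v (π ^ k) := by
  induction k with
  | zero => simp [rigid_one]
  | succ k ih => rw [pow_succ, ih, rigid_mul, ← pow_succ]

lemma rigid_inv (v : Vtx) (π : Perm (Fin 5)) : (rigid v π)⁻¹ = rigid v π⁻¹ :=
  inv_eq_of_mul_eq_one_right (by rw [rigid_mul, mul_inv_cancel, rigid_one])

lemma rigid_apply_short (v : Vtx) (π : Perm (Fin 5)) :
    ∀ w : Vtx, w.length ≤ v.length → rigid v π w = w := by
  induction v with
  | nil =>
    rintro w hw
    rw [List.length_nil, Nat.le_zero, List.length_eq_zero_iff] at hw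
    subst hw; rfl
  | cons x v ih =>
    rintro (_ | ⟨y, w⟩) hw
    · rfl
    · show wr 1 _ (y :: w) = y :: w
      simp only [List.length_cons, Nat.add_le_add_iff_right] at hw
      by_cases h : y = x <;> simp [h, ih w hw]

lemma rigid_apply_ne (v : Vtx) (π : Perm (Fin 5)) :
    ∀ (u : Vtx) (y : Fin 5) (r : Vtx), u.length = v.length → u ≠ v →
      rigid v π (u ++ y :: r) = u ++ y :: r := by
  induction v with
  | nil =>
    rintro u y r hu hne
    rw [List.length_nil, List.length_eq_zero_iff] at hu
    exact absurd hu hne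
  | cons x v ih =>
    rintro (_ | ⟨z, u⟩) y r hu hne
    · simp at hu
    · simp only [List.length_cons, Nat.add_right_cancel_iff] at hu
      show wr 1 _ (z :: (u ++ y :: r)) = z :: (u ++ y :: r)
      by_cases h : z = x
      · subst h
        have : u ≠ v := fun h' => hne (by rw [h'])
        simp [ih u y r hu this]
      · simp [h]

lemma rigid_apply_eq (v : Vtx) (π : Perm (Fin 5)) (y : Fin 5) (r : Vtx) :
    rigid v π (v ++ y :: r) = v ++ π y :: r := by
  induction v with
  | nil => rfl
  | cons x v ih =>
    show wr 1 _ (x :: (v ++ y :: r)) = x :: (v ++ π y :: r)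
    simp [ih]
/-! ### The subgroups generated by `t`-th powers -/
open Equiv

def Qs (t : ℕ) : Subgroup ↥Wgrp := Subgroup.closure {g : ↥Wgrp | ∃ w : ↥Wgrp, g = w ^ t}

lemma Qs_conj {t : ℕ} {g : ↥Wgrp} (hg : g ∈ Qs t) (c : ↥Wgrp) : c * g * c⁻¹ ∈ Qs t := by
  induction hg using Subgroup.closure_induction with
  | mem x hx =>
    obtain ⟨w, rfl⟩ := hx
    exact Subgroup.subset_closure ⟨c * w * c⁻¹, (conj_pow).symm⟩
  | one => simpa using one_mem _
  | mul x y hx hy ihx ihy =>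
    have h : c * (x * y) * c⁻¹ = (c * x * c⁻¹) * (c * y * c⁻¹) := by group
    rw [h]; exact mul_mem ihx ihy
  | inv x hx ihx =>
    have h : c * x⁻¹ * c⁻¹ = (c * x * c⁻¹)⁻¹ := by group
    rw [h]; exact inv_mem ihx

/-! ### Grafting at a first-level vertex -/

def graftF (a : Fin 5) (h : Perm Vtx) : Perm Vtx := wr 1 (fun x => if x = a then h else 1)

lemma graftF_mem (a : Fin 5) {h : Perm Vtx} (hh : h ∈ Wgrp) : graftF a h ∈ Wgrp :=
  wr_mem _ _ (by simp) (fun x => by by_cases hx : x = a <;> simp [hx, hh, one_mem])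

def graftA (a : Fin 5) : ↥Wgrp →* ↥Wgrp where
  toFun h := ⟨graftF a h.1, graftF_mem a h.2⟩
  map_one' := Subtype.ext (by
    show graftF a 1 = 1
    unfold graftF
    have h1 : (fun x : Fin 5 => if x = a then (1 : Perm Vtx) else 1) = fun _ => 1 :=
      funext (fun x => ite_self _)
    rw [h1, wr_one])
  map_mul' h₁ h₂ := Subtype.ext (by
    show graftF a (h₁.1 * h₂.1) = graftF a h₁.1 * graftF a h₂.1
    unfold graftF
    rw [wr_mul]
    exact (wr_congr (one_mul 1) (fun x => by
      by_cases hx : x = a <;> simp [hx])).symm)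

lemma graftA_coe (a : Fin 5) (h : ↥Wgrp) : (graftA a h : Perm Vtx) = graftF a h.1 := rfl

lemma graftF_mul_graftF {a b : Fin 5} (hab : a ≠ b) (h h' : Perm Vtx) :
    graftF a h * graftF b h' = wr 1 (fun x => if x = a then h else if x = b then h' else 1) := by
  unfold graftF
  rw [wr_mul]
  refine wr_congr (one_mul 1) (fun x => ?_)
  by_cases hx : x = a
  · subst hx
    simp [hab]
  · by_cases hx' : x = b <;> simp [hx, hx', Ne.symm hab]

lemma graftF_comm {a b : Fin 5} (hab : a ≠ b) (h h' : Perm Vtx) :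
    graftF a h * graftF b h' = graftF b h' * graftF a h := by
  rw [graftF_mul_graftF hab, graftF_mul_graftF hab.symm]
  refine wr_congr rfl (fun x => ?_)
  by_cases hx : x = a
  · subst hx; simp [hab]
  · by_cases hx' : x = b <;> simp [hx, hx', Ne.symm hab]

lemma graftA_commute {a b : Fin 5} (hab : a ≠ b) (h h' : ↥Wgrp) :
    Commute (graftA a h) (graftA b h') :=
  Subtype.ext (graftF_comm hab h.1 h'.1)

/-! ### Key power computation -/

lemma keyPow (a : Fin 5) (h : ↥Wgrp) (M : ℕ) :
    ∃ b : Fin 5, b ≠ a ∧ graftA a (h ^ M) * graftA b (h ^ M) ∈ Qs (2 * M) := by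
  obtain ⟨ρ, b, hs, h2, hab, hne⟩ := alt5_dt a
  have hinv : ∀ y, ρ (ρ y) = y := fun y => by
    rw [← Perm.mul_apply, h2, Perm.one_apply]
  refine ⟨b, hne, ?_⟩
  set g : ↥Wgrp := ⟨wr ρ (fun x => if x = a then h.1 else 1),
    wr_mem _ _ hs (fun x => by by_cases hx : x = a <;> simp [hx, h.2, one_mem])⟩ with hgdef
  have hg2 : g ^ 2 = graftA a h * graftA b h := by
    apply Subtype.ext
    show g.1 ^ 2 = graftF a h.1 * graftF b h.1
    rw [graftF_mul_graftF hne.symm, pow_two]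
    show wr ρ _ * wr ρ _ = _
    rw [wr_mul]
    refine wr_congr h2 (fun x => ?_)
    have hra : ρ a ≠ a := by rw [hab]; exact hne
    have hba : ρ b = a := by rw [← hab, hinv]
    by_cases hx : x = a
    · simp [hx, hra, hne.symm]
    · by_cases hx' : x = b
      · simp [hx', hba, hx, hne]
      · have hrx : ρ x ≠ a := fun hc => hx' (by rw [← hinv x, hc, hab])
        simp [hrx, hx, hx']
  have hcm : Commute (graftA a h) (graftA b h) := graftA_commute hne.symm h h
  have hfin : g ^ (2 * M) = graftA a (h ^ M) * graftA b (h ^ M) := by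
    rw [pow_mul, hg2, hcm.mul_pow, ← map_pow, ← map_pow]
  exact hfin ▸ Subgroup.subset_closure ⟨g, by rw [hfin]⟩
/-! ### Commutators with powers land in the power subgroup after grafting -/
open Equiv
open scoped commutatorElement

lemma conj_comm_aux {G : Type*} [Group G] (c x y : G) (h : y * c⁻¹ = c⁻¹ * y) :
    c * (x * y) * c⁻¹ * (x * y)⁻¹ = c * x * c⁻¹ * x⁻¹ := by
  have e1 : c * (x * y) * c⁻¹ * (x * y)⁻¹ = c * x * (y * c⁻¹) * y⁻¹ * x⁻¹ := by group
  rw [e1, h]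
  group

lemma graft_comm_mem (a : Fin 5) (M : ℕ) (k h : ↥Wgrp) :
    graftA a ⁅k, h ^ M⁆ ∈ Qs (2 * M) := by
  obtain ⟨b, hba, hx⟩ := keyPow a h M
  have hcomm : graftA b (h ^ M) * (graftA a k)⁻¹ = (graftA a k)⁻¹ * graftA b (h ^ M) :=
    ((graftA_commute (Ne.symm hba) k (h ^ M)).inv_left.symm).eq
  have hid : graftA a ⁅k, h ^ M⁆ =
      graftA a k * (graftA a (h ^ M) * graftA b (h ^ M)) * (graftA a k)⁻¹ *
        (graftA a (h ^ M) * graftA b (h ^ M))⁻¹ := by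
    rw [conj_comm_aux _ _ _ hcomm, commutatorElement_def]
    simp [map_mul, map_inv]
  rw [hid]
  exact mul_mem (Qs_conj hx (graftA a k)) (inv_mem hx)

def Nsub (M : ℕ) : Subgroup ↥Wgrp :=
  Subgroup.closure {g : ↥Wgrp | ∃ k h : ↥Wgrp, g = ⁅k, h ^ M⁆}

lemma Nsub_conj {M : ℕ} {g : ↥Wgrp} (hg : g ∈ Nsub M) (c : ↥Wgrp) : c * g * c⁻¹ ∈ Nsub M := by
  induction hg using Subgroup.closure_induction with
  | mem x hx =>
    obtain ⟨k, h, rfl⟩ := hx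
    refine Subgroup.subset_closure ⟨c * k * c⁻¹, c * h * c⁻¹, ?_⟩
    rw [commutatorElement_def, commutatorElement_def, conj_pow]
    group
  | one => simpa using one_mem _
  | mul x y hx hy ihx ihy =>
    have h : c * (x * y) * c⁻¹ = (c * x * c⁻¹) * (c * y * c⁻¹) := by group
    rw [h]; exact mul_mem ihx ihy
  | inv x hx ihx =>
    have h : c * x⁻¹ * c⁻¹ = (c * x * c⁻¹)⁻¹ := by group
    rw [h]; exact inv_mem ihx

lemma comm_mem_Nsub {M : ℕ} (k : ↥Wgrp) {q : ↥Wgrp} (hq : q ∈ Qs M) : ⁅k, q⁆ ∈ Nsub M := by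
  induction hq using Subgroup.closure_induction with
  | mem x hx =>
    obtain ⟨w, rfl⟩ := hx
    exact Subgroup.subset_closure ⟨k, w, rfl⟩
  | one => simpa using one_mem _
  | mul x y hx hy ihx ihy =>
    have h : ⁅k, x * y⁆ = ⁅k, x⁆ * (x * ⁅k, y⁆ * x⁻¹) := by
      rw [commutatorElement_def, commutatorElement_def, commutatorElement_def]
      group
    rw [h]
    exact mul_mem ihx (Nsub_conj ihy x)
  | inv x hx ihx =>
    have h : ⁅k, x⁻¹⁆ = x⁻¹ * ⁅k, x⁆⁻¹ * (x⁻¹)⁻¹ := by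
      rw [commutatorElement_def, commutatorElement_def]
      group
    rw [h]
    exact Nsub_conj (inv_mem ihx) x⁻¹

/-! ### Main lemma: rigid vertex permutations are products of `15^j·30^n`-th powers -/

/-- Reduce membership of all rigid even permutations to the even involutions. -/
lemma rigid_from_involutions {S : Subgroup ↥Wgrp} {v : Vtx} (π : Perm (Fin 5))
    (hπ : π.sign = 1)
    (hinv : ∀ (ι : Perm (Fin 5)) (hι : ι.sign = 1), ι * ι = 1 →
      (⟨rigid v ι, rigid_mem v ι hι⟩ : ↥Wgrp) ∈ S) :
    (⟨rigid v π, rigid_mem v π hπ⟩ : ↥Wgrp) ∈ S := by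
  obtain ⟨σ, hσ2, hσs, hτ2⟩ := alt5_two_inv π hπ
  have hτs : (σ * π).sign = 1 := by simp [hσs, hπ]
  have heq : (⟨rigid v π, rigid_mem v π hπ⟩ : ↥Wgrp) =
      ⟨rigid v σ, rigid_mem v σ hσs⟩ * ⟨rigid v (σ * π), rigid_mem v (σ * π) hτs⟩ := by
    apply Subtype.ext
    show rigid v π = rigid v σ * rigid v (σ * π)
    rw [rigid_mul, ← mul_assoc, hσ2, one_mul]
  rw [heq]
  exact mul_mem (hinv σ hσs hσ2) (hinv (σ * π) hτs hτ2)

theorem mainB : ∀ n j : ℕ, ∀ (v : Vtx) (π : Perm (Fin 5)) (hπ : π.sign = 1),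
    n ≤ v.length →
    (⟨rigid v π, rigid_mem v π hπ⟩ : ↥Wgrp) ∈ Qs (15 ^ j * 30 ^ n) := by
  intro n
  induction n with
  | zero =>
    intro j v π hπ _
    refine rigid_from_involutions π hπ (fun ι hι h2 => ?_)
    refine Subgroup.subset_closure ⟨⟨rigid v ι, rigid_mem v ι hι⟩, ?_⟩
    have ht : Odd (15 ^ j * 30 ^ 0) := by
      simpa using Odd.pow (a := 15) (n := j) (by decide)
    obtain ⟨c, hc⟩ := ht
    have hιt : ι ^ (15 ^ j * 30 ^ 0) = ι := by
      rw [hc, pow_succ, pow_mul, sq, h2, one_pow, one_mul]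
    apply Subtype.ext
    show rigid v ι = (rigid v ι) ^ (15 ^ j * 30 ^ 0)
    rw [rigid_pow, hιt]
  | succ n IH =>
    intro j v π hπ hv
    cases v with
    | nil => simp at hv
    | cons a w =>
      have hw : n ≤ w.length := Nat.succ_le_succ_iff.mp hv
      have h2M : 2 * (15 ^ (j + 1) * 30 ^ n) = 15 ^ j * 30 ^ (n + 1) := by ring
      set M := 15 ^ (j + 1) * 30 ^ n with hM
      have key : ∀ g : ↥Wgrp, g ∈ Nsub M → graftA a g ∈ Qs (2 * M) := by
        intro g hg
        induction hg using Subgroup.closure_induction with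
        | mem x hx =>
          obtain ⟨k, h, rfl⟩ := hx
          exact graft_comm_mem a M k h
        | one => rw [map_one]; exact one_mem _
        | mul x y hx hy ihx ihy => rw [map_mul]; exact mul_mem ihx ihy
        | inv x hx ihx => rw [map_inv]; exact inv_mem ihx
      have rigN : (⟨rigid w π, rigid_mem w π hπ⟩ : ↥Wgrp) ∈ Nsub M := by
        refine rigid_from_involutions π hπ (fun ι hι h2 => ?_)
        obtain ⟨α, β, hα, hβ, hc⟩ := alt5_inv_comm ι h2 hι
        have hβQ : (⟨rigid w β, rigid_mem w β hβ⟩ : ↥Wgrp) ∈ Qs M := IH (j + 1) w β hβ hw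
        have hmem := comm_mem_Nsub (M := M) ⟨rigid w α, rigid_mem w α hα⟩ hβQ
        have heq : ⁅(⟨rigid w α, rigid_mem w α hα⟩ : ↥Wgrp),
            (⟨rigid w β, rigid_mem w β hβ⟩ : ↥Wgrp)⁆ = ⟨rigid w ι, rigid_mem w ι hι⟩ := by
          apply Subtype.ext
          show rigid w α * rigid w β * (rigid w α)⁻¹ * (rigid w β)⁻¹ = rigid w ι
          rw [rigid_inv, rigid_inv, rigid_mul, rigid_mul, rigid_mul, hc]
        rw [heq] at hmem
        exact hmem
      have step := key _ rigN
      have heq2 : graftA a ⟨rigid w π, rigid_mem w π hπ⟩ =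
          ⟨rigid (a :: w) π, rigid_mem (a :: w) π hπ⟩ := Subtype.ext rfl
      rw [heq2, h2M] at step
      exact step
/-! ### Lists of vertices of a given level, and level corrections -/
open Equiv

lemma mem_StW {σ : ↥Wgrp} {n : ℕ} :
    σ ∈ StW n ↔ ∀ w : Vtx, w.length ≤ n → (σ : Perm Vtx) w = w := Iff.rfl

def words : ℕ → List Vtx
  | 0 => [([] : Vtx)]
  | k + 1 => (words k).flatMap (fun w => (List.finRange 5).map (fun x => w ++ [x]))

lemma length_of_mem_words : ∀ (k : ℕ) (w : Vtx), w ∈ words k → w.length = k := by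
  intro k
  induction k with
  | zero => intro w hw; simp [words] at hw; simp [hw]
  | succ k ih =>
    intro w hw
    simp only [words, List.mem_flatMap, List.mem_map] at hw
    obtain ⟨u, hu, x, _, rfl⟩ := hw
    simp [ih u hu]

lemma mem_words : ∀ (k : ℕ) (w : Vtx), w.length = k → w ∈ words k := by
  intro k
  induction k with
  | zero => intro w hw; rw [List.length_eq_zero_iff] at hw; simp [words, hw]
  | succ k ih =>
    intro w hw
    have hne : w ≠ [] := by rintro rfl; simp at hw
    have hsplit : w.dropLast ++ [w.getLast hne] = w := List.dropLast_append_getLast hne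
    have hlen : w.dropLast.length = k := by
      simp [List.length_dropLast, hw]
    simp only [words, List.mem_flatMap, List.mem_map]
    exact ⟨w.dropLast, ih _ hlen, w.getLast hne, List.mem_finRange _, hsplit⟩

lemma words_nodup : ∀ k : ℕ, (words k).Nodup := by
  intro k
  induction k with
  | zero => simp [words]
  | succ k ih =>
    rw [words, List.nodup_flatMap]
    constructor
    · intro u _
      refine List.Nodup.map ?_ (List.nodup_finRange 5)
      intro x y hxy
      simpa using List.append_cancel_left hxy
    · refine List.Pairwise.imp ?_ ih
      intro u v huv
      intro w' h1 h2
      simp only [List.mem_map] at h1 h2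
      obtain ⟨x, _, hx⟩ := h1
      obtain ⟨y, _, hy⟩ := h2
      exact huv (List.append_inj' (hx.trans hy.symm) rfl).1

def corr (P : Vtx → Perm (Fin 5)) (l : List Vtx) : Perm Vtx :=
  (l.map (fun v => rigid v (P v))).prod

lemma corr_short (P : Vtx → Perm (Fin 5)) (l : List Vtx) (m : ℕ)
    (hl : ∀ v ∈ l, v.length = m) (w : Vtx) (hw : w.length ≤ m) : corr P l w = w := by
  induction l with
  | nil => simp [corr]
  | cons v l ih =>
    have hv : v.length = m := hl v List.mem_cons_self
    have hrest : ∀ v' ∈ l, v'.length = m := fun v' h => hl v' (List.mem_cons_of_mem _ h)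
    show (rigid v (P v) * corr P l) w = w
    rw [Equiv.Perm.mul_apply, ih hrest, rigid_apply_short v (P v) w (hw.trans_eq hv.symm)]

lemma corr_level (P : Vtx → Perm (Fin 5)) (l : List Vtx) (m : ℕ)
    (hl : ∀ v ∈ l, v.length = m) (hnd : l.Nodup) (u : Vtx) (hu : u.length = m)
    (y : Fin 5) (r : Vtx) :
    corr P l (u ++ y :: r) = u ++ (if u ∈ l then P u y else y) :: r := by
  induction l with
  | nil => simp [corr]
  | cons v l ih =>
    have hv : v.length = m := hl v List.mem_cons_self
    have hrest : ∀ v' ∈ l, v'.length = m := fun v' h => hl v' (List.mem_cons_of_mem _ h)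
    have hnd' : l.Nodup := hnd.of_cons
    show (rigid v (P v) * corr P l) (u ++ y :: r) = _
    rw [Equiv.Perm.mul_apply, ih hrest hnd']
    by_cases huv : u = v
    · subst huv
      have hnotmem : u ∉ l := (List.nodup_cons.mp hnd).1
      rw [if_neg hnotmem, rigid_apply_eq, if_pos List.mem_cons_self]
    · have h2 : (if u ∈ v :: l then P u y else y) = (if u ∈ l then P u y else y) := by
        by_cases hm : u ∈ l <;> simp [huv, hm]
      rw [h2]
      exact rigid_apply_ne v (P v) u _ _ (hu.trans hv.symm) huv

/-! ### Powers land in stabilizers -/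

lemma pow_fix {σ : Perm Vtx} {w : Vtx} (hw : σ w = w) (j : ℕ) : (σ ^ j) w = w := by
  induction j with
  | zero => rfl
  | succ j ih => rw [pow_succ, Equiv.Perm.mul_apply, hw, ih]

lemma local_perm (σ : ↥Wgrp) (u : Vtx) : ∃ π : Perm (Fin 5), π.sign = 1 ∧
    ∀ x : Fin 5, (σ : Perm Vtx) (u ++ [x]) = (σ : Perm Vtx) u ++ [π x] := by
  obtain ⟨π, hπ, h⟩ := σ.2.2 u
  exact ⟨π, Equiv.Perm.mem_alternatingGroup.mp hπ, h⟩

lemma pow30_StW {σ : ↥Wgrp} {k : ℕ} (h : σ ∈ StW k) : σ ^ 30 ∈ StW (k + 1) := by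
  rw [mem_StW] at h ⊢
  intro w hw
  rcases Nat.lt_or_ge w.length (k + 1) with hlt | hge
  · have : (σ : Perm Vtx) w = w := h w (Nat.lt_succ_iff.mp hlt)
    calc ((σ ^ 30 : ↥Wgrp) : Perm Vtx) w = ((σ : Perm Vtx) ^ 30) w := by
          rw [SubmonoidClass.coe_pow]
    _ = w := pow_fix this 30
  · have hlen : w.length = k + 1 := le_antisymm hw hge
    have hne : w ≠ [] := by rintro rfl; simp at hlen
    obtain ⟨u, z, rfl⟩ : ∃ (u : Vtx) (z : Fin 5), w = u ++ [z] :=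
      ⟨w.dropLast, w.getLast hne, (List.dropLast_append_getLast hne).symm⟩
    have hulen : u.length ≤ k := by
      have := hlen
      simp only [List.length_append, List.length_cons, List.length_nil] at this
      omega
    have hufix : (σ : Perm Vtx) u = u := h u hulen
    obtain ⟨π, hπs, hπ⟩ := local_perm σ u
    have key : ∀ (j : ℕ) (z : Fin 5), ((σ : Perm Vtx) ^ j) (u ++ [z]) = u ++ [(π ^ j) z] := by
      intro j
      induction j with
      | zero => intro z; simp
      | succ j ih =>
        intro z
        rw [pow_succ, Equiv.Perm.mul_apply, hπ z, hufix, ih (π z), pow_succ,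
          Equiv.Perm.mul_apply]
    calc ((σ ^ 30 : ↥Wgrp) : Perm Vtx) (u ++ [z]) = ((σ : Perm Vtx) ^ 30) (u ++ [z]) := by
          rw [SubmonoidClass.coe_pow]
    _ = u ++ [(π ^ 30) z] := key 30 z
    _ = u ++ [z] := by rw [alt5_pow30 π hπs, Equiv.Perm.one_apply]

lemma pow_mem_StW (n : ℕ) (σ : ↥Wgrp) : σ ^ 30 ^ n ∈ StW n := by
  induction n with
  | zero =>
    rw [pow_zero, pow_one, mem_StW]
    intro w hw
    rw [Nat.le_zero, List.length_eq_zero_iff] at hw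
    subst hw
    exact σ.2.1
  | succ n ih =>
    rw [pow_succ, pow_mul]
    exact pow30_StW ih

lemma powSub_le_StW (n : ℕ) : powSub n ≤ StW n := by
  rw [powSub, Subgroup.closure_le]
  rintro g ⟨σ, rfl⟩
  exact pow_mem_StW n σ

lemma StW_antitone {j j' : ℕ} (h : j ≤ j') : StW j' ≤ StW j := by
  intro σ hσ
  rw [mem_StW] at hσ ⊢
  exact fun w hw => hσ w (hw.trans h)
/-! ### The hard direction: stabilizers are covered by power subgroups at every level -/
open Equiv

lemma powSub_eq (n : ℕ) : powSub n = Qs (30 ^ n) := rfl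

lemma powSub_map (ψ : ↥Wgrp ≃* ↥Wgrp) {n : ℕ} {g : ↥Wgrp} (hg : g ∈ powSub n) :
    ψ g ∈ powSub n := by
  induction hg using Subgroup.closure_induction with
  | mem x hx =>
    obtain ⟨w, rfl⟩ := hx
    exact Subgroup.subset_closure ⟨ψ w, by rw [map_pow]⟩
  | one => rw [map_one]; exact one_mem _
  | mul x y _ _ ihx ihy => rw [map_mul]; exact mul_mem ihx ihy
  | inv x _ ihx => rw [map_inv]; exact inv_mem ihx

lemma hard (n : ℕ) (hn : 1 ≤ n) : ∀ m : ℕ, n ≤ m → ∀ σ : ↥Wgrp, σ ∈ StW n →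
    ∃ g ∈ powSub n, ∀ w : Vtx, w.length ≤ m → (g : Perm Vtx) w = (σ : Perm Vtx) w := by
  intro m hm
  induction m, hm using Nat.le_induction with
  | base =>
    intro σ hσ
    exact ⟨1, one_mem _, fun w hw => (mem_StW.mp hσ w hw).symm⟩
  | succ m hm ih =>
    intro σ hσ
    obtain ⟨g₀, hg₀, hag⟩ := ih σ hσ
    set τ : ↥Wgrp := g₀⁻¹ * σ with hτdef
    have hτfix : ∀ w : Vtx, w.length ≤ m → (τ : Perm Vtx) w = w := by
      intro w hw
      show (g₀ : Perm Vtx)⁻¹ ((σ : Perm Vtx) w) = w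
      rw [← hag w hw]; exact Equiv.symm_apply_apply _ w
    set P : Vtx → Perm (Fin 5) := fun u => Classical.choose (local_perm τ u) with hPdef
    have hP : ∀ u : Vtx, (P u).sign = 1 ∧
        ∀ x : Fin 5, (τ : Perm Vtx) (u ++ [x]) = (τ : Perm Vtx) u ++ [(P u) x] :=
      fun u => Classical.choose_spec (local_perm τ u)
    set cW : ↥Wgrp :=
      ((words m).map (fun v => (⟨rigid v (P v), rigid_mem v (P v) (hP v).1⟩ : ↥Wgrp))).prod
      with hcWdef
    have hcW_coe : (cW : Perm Vtx) = corr P (words m) := by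
      rw [hcWdef, SubmonoidClass.coe_list_prod, List.map_map, corr]
      rfl
    have hcW_mem : cW ∈ powSub n := by
      rw [hcWdef]
      refine list_prod_mem (fun x hx => ?_)
      rw [List.mem_map] at hx
      obtain ⟨v, hv, rfl⟩ := hx
      have hvlen : n ≤ v.length := by
        rw [length_of_mem_words m v hv]
        exact hm
      have := mainB n 0 v (P v) (hP v).1 hvlen
      rwa [pow_zero, one_mul, ← powSub_eq] at this
    refine ⟨g₀ * cW, mul_mem hg₀ hcW_mem, fun w hw => ?_⟩
    have hσeq : (σ : Perm Vtx) w = (g₀ : Perm Vtx) ((τ : Perm Vtx) w) := by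
      show _ = (g₀ : Perm Vtx) ((g₀ : Perm Vtx)⁻¹ ((σ : Perm Vtx) w))
      exact (Equiv.apply_symm_apply _ _).symm
    have hgeq : ((g₀ * cW : ↥Wgrp) : Perm Vtx) w = (g₀ : Perm Vtx) ((cW : Perm Vtx) w) := rfl
    rw [hgeq, hσeq]
    congr 1
    rcases Nat.lt_or_ge w.length (m + 1) with hlt | hge
    · have hwm : w.length ≤ m := Nat.lt_succ_iff.mp hlt
      rw [hcW_coe, corr_short P (words m) m (length_of_mem_words m) w hwm, hτfix w hwm]
    · have hlen : w.length = m + 1 := le_antisymm hw hge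
      have hne : w ≠ [] := by rintro rfl; simp at hlen
      obtain ⟨u, z, rfl⟩ : ∃ (u : Vtx) (z : Fin 5), w = u ++ [z] :=
        ⟨w.dropLast, w.getLast hne, (List.dropLast_append_getLast hne).symm⟩
      have hulen : u.length = m := by
        simp only [List.length_append, List.length_cons, List.length_nil] at hlen
        omega
      have hτu : (τ : Perm Vtx) (u ++ [z]) = u ++ [(P u) z] := by
        rw [(hP u).2 z, hτfix u hulen.le]
      rw [hτu, hcW_coe,
        corr_level P (words m) m (length_of_mem_words m) (words_nodup m) u hulen z [],
        if_pos (mem_words m u hulen)]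
/-- **Lemma.** For every `n ≥ 1`, the level stabilizer `St_W(n)` is the closure in `W` of
the subgroup generated by all `e^n`-th powers (`e = 30` being the exponent of `Alt(5)`):
for all `m ≥ n`, the image in `Aut(T[m])` of `⟨{w^{e^n} : w ∈ W}⟩` equals the image in
`Aut(T[m])` of `St_W(n)` — i.e. an element `σ ∈ W` agrees up to level `m` with an element
of the one subgroup iff it does so with an element of the other.  In particular `St_W(n)`
is topologically characteristic: it is preserved by every automorphism `φ` of `W` which is
continuous together with its inverse. -/
theorem stabilizer_is_closure_of_powers (n : ℕ) (hn : 1 ≤ n) :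
    (∀ m : ℕ, n ≤ m → ∀ σ : ↥Wgrp,
      (∃ g ∈ powSub n, ∀ w : Vtx, w.length ≤ m →
          (g : Equiv.Perm Vtx) w = (σ : Equiv.Perm Vtx) w) ↔
      (∃ g ∈ StW n, ∀ w : Vtx, w.length ≤ m →
          (g : Equiv.Perm Vtx) w = (σ : Equiv.Perm Vtx) w)) ∧
    (∀ φ : ↥Wgrp ≃* ↥Wgrp,
      (∀ k : ℕ, ∃ j : ℕ, ∀ g : ↥Wgrp, g ∈ StW j → φ g ∈ StW k) →
      (∀ k : ℕ, ∃ j : ℕ, ∀ g : ↥Wgrp, g ∈ StW j → φ.symm g ∈ StW k) →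
      Subgroup.map φ.toMonoidHom (StW n) = StW n) := by
  constructor
  · intro m hm σ
    constructor
    · rintro ⟨g, hg, hag⟩
      refine ⟨σ, ?_, fun w _ => rfl⟩
      rw [mem_StW]
      intro w hw
      rw [← hag w (hw.trans hm)]
      exact mem_StW.mp (powSub_le_StW n hg) w hw
    · rintro ⟨g, hg, hag⟩
      have hσ : σ ∈ StW n := by
        rw [mem_StW]
        intro w hw
        rw [← hag w (hw.trans hm)]
        exact mem_StW.mp hg w hw
      exact hard n hn m hm σ hσ
  · intro φ hφ hφs
    have main : ∀ ψ : ↥Wgrp ≃* ↥Wgrp, (∀ k : ℕ, ∃ j : ℕ, ∀ g : ↥Wgrp, g ∈ StW j → ψ g ∈ StW k) →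
        ∀ g ∈ StW n, ψ g ∈ StW n := by
      intro ψ hψ g hg
      obtain ⟨j, hj⟩ := hψ n
      obtain ⟨h, hh, hha⟩ := hard n hn (max j n) (le_max_right _ _) g hg
      have hmem : h * g⁻¹ ∈ StW (max j n) := by
        rw [mem_StW]
        intro w hw
        have hlen2 : ((g : Equiv.Perm Vtx)⁻¹ w).length = w.length := by
          conv_rhs => rw [← (Equiv.apply_symm_apply (g : Equiv.Perm Vtx) w :
              (g : Equiv.Perm Vtx) ((g : Equiv.Perm Vtx)⁻¹ w) = w)]
          exact (Wgrp.length_eq g.2 _).symm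
        show (h : Equiv.Perm Vtx) ((g : Equiv.Perm Vtx)⁻¹ w) = w
        rw [hha _ (le_of_eq_of_le hlen2 hw)]; exact Equiv.apply_symm_apply _ w
      have h1 : ψ (h * g⁻¹) ∈ StW n := hj _ (StW_antitone (le_max_left j n) hmem)
      have h2 : ψ h ∈ StW n := powSub_le_StW n (powSub_map ψ hh)
      have heq : ψ g = (ψ (h * g⁻¹))⁻¹ * ψ h := by
        rw [← map_inv, ← map_mul]
        congr 1
        group
      rw [heq]
      exact mul_mem (inv_mem h1) h2
    apply le_antisymm
    · rintro x hx
      rw [Subgroup.mem_map] at hx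
      obtain ⟨g, hg, rfl⟩ := hx
      exact main φ hφ g hg
    · intro g hg
      rw [Subgroup.mem_map]
      exact ⟨φ.symm g, main φ.symm hφs g hg, by simp⟩
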